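/- There exists m₀ such that for all m ≥ m₀, zero is a regular value of u_m on the open unit ball B₁ ⊂ ℝ^n: at every point of B₁ where u_m = 0, the gradient ∇u_m is nonzero. Here u_m(X,y,z,w) = |X|² - ℓy² + η_m·e^{λ_m·x₁}·cos(λ_m·z), λ_m = 8πm, η_m = e^{-λ_m}·λ_m^{-4}. -/

import Mathlib

open Real

set_option maxHeartbeats 1600000 in
/-- for all sufficiently large `m`, zero is a regular value of
`u_m(v) = |X|² - ℓ y² + η_m e^{λ_m x₁} cos(λ_m z)` on the open unit ball of `ℝ^n`:
wherever `u_m = 0` in `B₁`, the gradient `∇u_m` is nonzero.  Here `X = (v 0,…,v (ℓ-1))`,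
`y = v ℓ`, `z = v (ℓ+1)`, `λ_m = 8πm`, `η_m = e^{-λ_m} λ_m⁻⁴`. -/
theorem zero_regular_value (n ℓ : ℕ) (hn : 3 ≤ n) (hℓ : 1 ≤ ℓ) (hℓn : ℓ ≤ n - 2)
    (u : ℕ → EuclideanSpace ℝ (Fin n) → ℝ)
    (hu : ∀ (m : ℕ) (v : EuclideanSpace ℝ (Fin n)), u m v =
      (∑ i : Fin n, if (i : ℕ) < ℓ then (v i) ^ 2 else 0)
        - (ℓ : ℝ) * (v ⟨ℓ, by omega⟩) ^ 2
        + (Real.exp (-(8 * π * m)) * (8 * π * m) ^ (-4 : ℤ))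
            * Real.exp ((8 * π * m) * v ⟨0, by omega⟩)
            * Real.cos ((8 * π * m) * v ⟨ℓ + 1, by omega⟩)) :
    ∃ m₀ : ℕ, ∀ m : ℕ, m₀ ≤ m →
      ∀ v : EuclideanSpace ℝ (Fin n), ‖v‖ < 1 → u m v = 0 → gradient (u m) v ≠ 0 := by
  refine ⟨1, fun m hm v hv hu0 hgrad0 => ?_⟩
  have hπ := Real.pi_gt_three
  have hm1 : (1:ℝ) ≤ (m:ℝ) := by exact_mod_cast hm
  set lam : ℝ := 8 * π * m with hlam
  have hlampos : (24:ℝ) ≤ lam := by nlinarith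
  have hlam0 : 0 < lam := by linarith
  set c : ℝ := Real.exp (-lam) * lam ^ (-4 : ℤ) with hc
  have hcpos : 0 < c := by
    have := zpow_pos hlam0 (-4 : ℤ)
    positivity
  have h0n : 0 < n := by omega
  have hln : ℓ < n := by omega
  have hl1n : ℓ + 1 < n := by omega
  set i0 : Fin n := ⟨0, h0n⟩ with hi0
  set il : Fin n := ⟨ℓ, hln⟩ with hil
  set iz : Fin n := ⟨ℓ + 1, hl1n⟩ with hiz
  -- abbreviations
  set a : ℝ := v i0 with ha
  set E1 : ℝ := Real.exp (lam * v i0) with hE1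
  set K : ℝ := Real.cos (lam * v iz) with hK
  set S : ℝ := Real.sin (lam * v iz) with hS
  have hE1pos : 0 < E1 := Real.exp_pos _
  -- the function
  have hfun : u m = fun w : EuclideanSpace ℝ (Fin n) =>
      (∑ i : Fin n, if (i : ℕ) < ℓ then (w i) ^ 2 else 0)
        - (ℓ : ℝ) * (w il) ^ 2
        + (c * Real.exp (lam * w i0) * Real.cos (lam * w iz)) := funext fun w => hu m w
  -- derivative pieces
  have hproj : ∀ i : Fin n, HasFDerivAt (fun w : EuclideanSpace ℝ (Fin n) => w i)
      (EuclideanSpace.proj i : EuclideanSpace ℝ (Fin n) →L[ℝ] ℝ) v :=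
    fun i => (EuclideanSpace.proj i : EuclideanSpace ℝ (Fin n) →L[ℝ] ℝ).hasFDerivAt
  have hsq : ∀ i : Fin n, HasFDerivAt (fun w : EuclideanSpace ℝ (Fin n) => (w i) ^ 2)
      ((2 * v i) • (EuclideanSpace.proj i : EuclideanSpace ℝ (Fin n) →L[ℝ] ℝ)) v := by
    intro i
    have := (hproj i).mul (hproj i)
    have h2 : (fun w : EuclideanSpace ℝ (Fin n) => (w i) ^ 2)
        = fun w : EuclideanSpace ℝ (Fin n) => w i * w i := by
      funext w; ring
    rw [h2]
    refine this.congr_fderiv ?_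
    rw [two_mul, add_smul]
  have hA : HasFDerivAt (fun w : EuclideanSpace ℝ (Fin n) =>
        ∑ i : Fin n, if (i : ℕ) < ℓ then (w i) ^ 2 else 0)
      (∑ i : Fin n, if (i : ℕ) < ℓ then
        (2 * v i) • (EuclideanSpace.proj i : EuclideanSpace ℝ (Fin n) →L[ℝ] ℝ) else 0) v := by
    apply HasFDerivAt.fun_sum
    intro i _
    by_cases h : (i : ℕ) < ℓ
    · simp only [if_pos h]; exact hsq i
    · simp only [if_neg h]; exact hasFDerivAt_const 0 v
  have hB : HasFDerivAt (fun w : EuclideanSpace ℝ (Fin n) => (ℓ : ℝ) * (w il) ^ 2)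
      (((ℓ:ℝ) * (2 * v il)) • (EuclideanSpace.proj il : EuclideanSpace ℝ (Fin n) →L[ℝ] ℝ)) v := by
    have := (hsq il).const_mul (ℓ : ℝ)
    refine this.congr_fderiv ?_
    rw [smul_smul]
  have hexp : HasFDerivAt (fun w : EuclideanSpace ℝ (Fin n) => Real.exp (lam * w i0))
      ((E1 * lam) • (EuclideanSpace.proj i0 : EuclideanSpace ℝ (Fin n) →L[ℝ] ℝ)) v := by
    have h1 := (hproj i0).const_mul lam
    have := (Real.hasDerivAt_exp (lam * v i0)).comp_hasFDerivAt v h1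
    refine this.congr_fderiv ?_
    rw [smul_smul]
  have hcosd : HasFDerivAt (fun w : EuclideanSpace ℝ (Fin n) => Real.cos (lam * w iz))
      ((-S * lam) • (EuclideanSpace.proj iz : EuclideanSpace ℝ (Fin n) →L[ℝ] ℝ)) v := by
    have h1 := (hproj iz).const_mul lam
    have := (Real.hasDerivAt_cos (lam * v iz)).comp_hasFDerivAt v h1
    refine this.congr_fderiv ?_
    rw [smul_smul]
  have hCe : HasFDerivAt (fun w : EuclideanSpace ℝ (Fin n) => c * Real.exp (lam * w i0))
      ((c * (E1 * lam)) • (EuclideanSpace.proj i0 : EuclideanSpace ℝ (Fin n) →L[ℝ] ℝ)) v := by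
    have := hexp.const_mul c
    refine this.congr_fderiv ?_
    rw [smul_smul]
  have hC := hCe.mul hcosd
  have hL : HasFDerivAt (u m)
      (((∑ i : Fin n, if (i : ℕ) < ℓ then
          (2 * v i) • (EuclideanSpace.proj i : EuclideanSpace ℝ (Fin n) →L[ℝ] ℝ) else 0)
        - ((ℓ:ℝ) * (2 * v il)) • (EuclideanSpace.proj il : EuclideanSpace ℝ (Fin n) →L[ℝ] ℝ))
        + ((c * E1) • ((-S * lam) • (EuclideanSpace.proj iz : EuclideanSpace ℝ (Fin n) →L[ℝ] ℝ))
          + K • ((c * (E1 * lam)) • (EuclideanSpace.proj i0 : EuclideanSpace ℝ (Fin n) →L[ℝ] ℝ)))) v := by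
    rw [hfun]
    exact (hA.sub hB).add hC
  set L := (((∑ i : Fin n, if (i : ℕ) < ℓ then
          (2 * v i) • (EuclideanSpace.proj i : EuclideanSpace ℝ (Fin n) →L[ℝ] ℝ) else 0)
        - ((ℓ:ℝ) * (2 * v il)) • (EuclideanSpace.proj il : EuclideanSpace ℝ (Fin n) →L[ℝ] ℝ))
        + ((c * E1) • ((-S * lam) • (EuclideanSpace.proj iz : EuclideanSpace ℝ (Fin n) →L[ℝ] ℝ))
          + K • ((c * (E1 * lam)) • (EuclideanSpace.proj i0 : EuclideanSpace ℝ (Fin n) →L[ℝ] ℝ)))) with hLdef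
  have hgrad : gradient (u m) v = (InnerProductSpace.toDual ℝ _).symm L :=
    hL.hasGradientAt.gradient
  have hL0 : L = 0 := by
    have := hgrad0
    rw [hgrad] at this
    have := congrArg (InnerProductSpace.toDual ℝ (EuclideanSpace ℝ (Fin n))) this
    simpa using this
  have hLe : ∀ j : Fin n, L (EuclideanSpace.single j 1) = 0 := by
    intro j; rw [hL0]; simp
  -- evaluation lemma
  have step : ∀ j i : Fin n,
      (if (i : ℕ) < ℓ then
        (2 * v i) • (EuclideanSpace.proj i : EuclideanSpace ℝ (Fin n) →L[ℝ] ℝ) else 0)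
        (EuclideanSpace.single j 1) =
      if i = j then (if (i : ℕ) < ℓ then 2 * v i else 0) else 0 := by
    intro j i
    by_cases hij : i = j
    · subst hij
      by_cases h : (i : ℕ) < ℓ <;> simp [h, PiLp.proj_apply, EuclideanSpace.single_apply]
    · by_cases h : (i : ℕ) < ℓ <;> simp [h, hij, PiLp.proj_apply, EuclideanSpace.single_apply]
  have evalL : ∀ j : Fin n, L (EuclideanSpace.single j 1) =
      ((if (j : ℕ) < ℓ then 2 * v j else 0)
        - if il = j then (ℓ:ℝ) * (2 * v il) else 0)
        + ((if iz = j then -(c * E1 * (S * lam)) else 0)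
          + if i0 = j then K * (c * (E1 * lam)) else 0) := by
    intro j
    rw [hLdef]
    simp only [ContinuousLinearMap.add_apply, ContinuousLinearMap.sub_apply,
      ContinuousLinearMap.smul_apply, ContinuousLinearMap.coe_sum', Finset.sum_apply,
      PiLp.proj_apply, EuclideanSpace.single_apply, smul_eq_mul]
    rw [Finset.sum_congr rfl (fun i _ => step j i),
      Finset.sum_ite_eq' Finset.univ j (fun i => if (i : ℕ) < ℓ then 2 * v i else 0)]
    simp only [Finset.mem_univ, if_true, mul_ite, mul_one, mul_zero]
    ring_nf
  -- index facts
  have hil0 : ¬ (il = i0) := by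
    simp only [hil, hi0, Ne, Fin.mk.injEq]; omega
  have hi0il : ¬ (i0 = il) := fun h => hil0 h.symm
  have hiliz : ¬ (il = iz) := by
    simp only [hil, hiz, Ne, Fin.mk.injEq]; omega
  have hizil : ¬ (iz = il) := fun h => hiliz h.symm
  have hi0iz : ¬ (i0 = iz) := by
    simp only [hi0, hiz, Ne, Fin.mk.injEq]; omega
  have hizi0 : ¬ (iz = i0) := fun h => hi0iz h.symm
  have hilℓ : ¬ ((il : ℕ) < ℓ) := by simp [hil]
  have hizℓ : ¬ ((iz : ℕ) < ℓ) := by simp [hiz]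
  have hi0ℓ : (i0 : ℕ) < ℓ := by simp only [hi0]; omega
  -- extract equations
  have hvil : v il = 0 := by
    have h := hLe il
    rw [evalL il, if_neg hilℓ, if_pos rfl, if_neg hizil, if_neg hi0il] at h
    have hℓR : (0:ℝ) < (ℓ:ℝ) := by exact_mod_cast hℓ
    have h2 : v il * (2 * (ℓ:ℝ)) = 0 := by linear_combination -h
    rcases mul_eq_zero.mp h2 with h' | h'
    · exact h'
    · exact absurd h' (ne_of_gt (by positivity))
  have eq_iz : S = 0 := by
    have h := hLe iz
    rw [evalL iz, if_neg hizℓ, if_neg hiliz, if_pos rfl, if_neg hi0iz] at h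
    have h2 : S * (c * E1 * lam) = 0 := by linear_combination -h
    rcases mul_eq_zero.mp h2 with h' | h'
    · exact h'
    · exact absurd h' (ne_of_gt (by positivity))
  have eq_i0 : 2 * a + K * (c * (E1 * lam)) = 0 := by
    have h := hLe i0
    rw [evalL i0, if_pos hi0ℓ, if_neg hil0, if_neg hizi0, if_pos rfl] at h
    rw [ha]; linarith
  -- vanishing of other coordinates
  have hvother : ∀ i : Fin n, (i : ℕ) < ℓ → i ≠ i0 → v i = 0 := by
    intro i hiℓ hii0
    have hiil : ¬ (il = i) := by
      intro h; rw [← h] at hiℓ; exact hilℓ hiℓ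
    have hiiz : ¬ (iz = i) := by
      intro h; rw [← h] at hiℓ; exact hizℓ hiℓ
    have h := hLe i
    rw [evalL i, if_pos hiℓ, if_neg hiil, if_neg hiiz, if_neg (fun h' => hii0 h'.symm)] at h
    linarith
  -- cos squared is one
  have hK2 : K ^ 2 = 1 := by
    have h := Real.sin_sq_add_cos_sq (lam * v iz)
    rw [← hS, ← hK, eq_iz] at h
    linear_combination h
  -- value of u
  have hsum : (∑ i : Fin n, if (i : ℕ) < ℓ then (v i) ^ 2 else 0) = a ^ 2 := by
    rw [Finset.sum_eq_single i0]
    · simp [hi0ℓ, ha]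
    · intro i _ hii0
      by_cases h : (i : ℕ) < ℓ
      · simp [h, hvother i h hii0]
      · simp [h]
    · simp
  have hval : a ^ 2 + c * E1 * K = 0 := by
    have h : u m v = (∑ i : Fin n, if (i : ℕ) < ℓ then (v i) ^ 2 else 0)
        - (ℓ:ℝ) * (v il) ^ 2
        + (c * Real.exp (lam * v i0) * Real.cos (lam * v iz)) := by rw [hfun]
    rw [hu0, hsum, hvil, ← hE1, ← hK] at h
    linear_combination -h
  -- final contradiction
  have key : 2 * a - lam * a ^ 2 = 0 := by
    linear_combination eq_i0 - lam * hval
  by_cases ha0 : a = 0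
  · rw [ha0] at hval
    have h0 : c * E1 * K = 0 := by linear_combination hval
    have hK0 : K = 0 := by
      rcases mul_eq_zero.mp h0 with h' | h'
      · exact absurd h' (ne_of_gt (by positivity))
      · exact h'
    rw [hK0] at hK2; norm_num at hK2
  · have hla : lam * a = 2 := by
      have h : a * (2 - lam * a) = 0 := by linear_combination key
      rcases mul_eq_zero.mp h with h' | h'
      · exact absurd h' ha0
      · linarith
    have hE1eq : E1 = Real.exp 2 := by
      rw [hE1, ← ha, hla]
    have hcE1K : c * E1 * K = -a ^ 2 := by linarith
    have ha2 : a ^ 2 * lam ^ 2 = 4 := by linear_combination (lam * a + 2) * hla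
    have ha2pos : 0 < a ^ 2 := by positivity
    have hK1 : K = 1 ∨ K = -1 := by
      have h : (K - 1) * (K + 1) = 0 := by linear_combination hK2
      rcases mul_eq_zero.mp h with h' | h'
      · left; linarith
      · right; linarith
    have hcE1 : c * E1 = a ^ 2 := by
      rcases hK1 with h | h
      · exfalso; rw [h, mul_one] at hcE1K
        linarith [mul_pos hcpos hE1pos]
      · rw [h] at hcE1K; linarith
    have hz : lam ^ (-4 : ℤ) * lam ^ (4:ℕ) = 1 := by
      rw [← zpow_natCast lam 4, ← zpow_add₀ (ne_of_gt hlam0)]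
      norm_num
    have hczpow : c * lam ^ 4 = Real.exp (-lam) := by
      rw [hc, mul_assoc, hz, mul_one]
    have hfinal : Real.exp (2 - lam) = 4 * lam ^ 2 := by
      have h1 : Real.exp (2 - lam) = Real.exp (-lam) * Real.exp 2 := by
        rw [← Real.exp_add]; ring_nf
      rw [h1, ← hczpow, ← hE1eq]
      linear_combination lam ^ 4 * hcE1 + lam ^ 2 * ha2
    have h3 : Real.exp (2 - lam) < 1 := by
      rw [Real.exp_lt_one_iff]; linarith
    have h4 : (1:ℝ) < 4 * lam ^ 2 := by nlinarith [hlampos]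
    linarith
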